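/- arXiv:2306.06045 — 2 statements merged into one kernel-verified Lean document; each statement's English description precedes it below -/
import Mathlib

section
/- Let a₁,a₂,b₁,b₂,c₁,c₂,μ₁,μ₂ be positive constants and define f₁(u₁,u₂) = u₁(-a₁ + b₁u₁ - c₁u₂), f₂(u₁,u₂) = u₂(-a₂ - b₂u₁ + c₂u₂). Set ψ₁ = min{μ₁b₁, μ₂c₂}, ψ₂ = (μ₁c₁ + μ₂b₂)/2, c = max{μ₁a₁, μ₂a₂}, and assume ψ₁ > ψ₂ > 0. Then with ψ = (ψ₁ - ψ₂)/2, for all u₁ ≥ 0, u₂ ≥ 0: μ₁f₁(u₁,u₂) + μ₂f₂(u₁,u₂) ≥ ψ(u₁+u₂)² - c(u₁+u₂). -/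
/-!
Bounding the diagonal coefficients `μ₁b₁`, `μ₂c₂` below by `ψ₁` and the linear coefficients
`μ₁a₁`, `μ₂a₂` above by `c` reduces the claim to the quadratic-form inequality
`ψ₁ (u₁² + u₂²) - 2ψ₂ u₁u₂ ≥ ψ (u₁ + u₂)²`, which follows from the identity
`ψ₁ (x² + y²) - 2ψ₂ xy = (ψ₁ - ψ₂)/2 · (x + y)² + (ψ₁ + ψ₂)/2 · (x - y)²`.
-/

lemma min_mul_sq_add_sq_le (A D x y : ℝ) : min A D * (x ^ 2 + y ^ 2) ≤ A * x ^ 2 + D * y ^ 2 := by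
  nlinarith [min_le_left A D, min_le_right A D, sq_nonneg x, sq_nonneg y]

lemma mul_add_mul_le_max_mul_add {x y : ℝ} (hx : 0 ≤ x) (hy : 0 ≤ y) (α β : ℝ) :
    α * x + β * y ≤ max α β * (x + y) := by
  nlinarith [le_max_left α β, le_max_right α β]

lemma sub_div_two_mul_add_sq_le {p q : ℝ} (hpq : 0 ≤ p + q) (x y : ℝ) :
    (p - q) / 2 * (x + y) ^ 2 ≤ p * (x ^ 2 + y ^ 2) - 2 * q * x * y := by
  have key : p * (x ^ 2 + y ^ 2) - 2 * q * x * y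
      = (p - q) / 2 * (x + y) ^ 2 + (p + q) / 2 * (x - y) ^ 2 := by ring
  rw [key]
  nlinarith [mul_nonneg hpq (sq_nonneg (x - y))]

theorem stmt_1_general (a₁ a₂ b₁ b₂ c₁ c₂ μ₁ μ₂ : ℝ)
    (f₁ f₂ : ℝ → ℝ → ℝ)
    (hf₁ : ∀ u₁ u₂, f₁ u₁ u₂ = u₁ * (-a₁ + b₁ * u₁ - c₁ * u₂))
    (hf₂ : ∀ u₁ u₂, f₂ u₁ u₂ = u₂ * (-a₂ - b₂ * u₁ + c₂ * u₂))
    (ψ₁ ψ₂ c ψ : ℝ)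
    (hψ₁ : ψ₁ = min (μ₁ * b₁) (μ₂ * c₂))
    (hψ₂ : ψ₂ = (μ₁ * c₁ + μ₂ * b₂) / 2)
    (hc : c = max (μ₁ * a₁) (μ₂ * a₂))
    (hord : ψ₁ > ψ₂) (hpos : ψ₂ > 0)
    (hψ : ψ = (ψ₁ - ψ₂) / 2) :
    ∀ u₁ u₂ : ℝ, 0 ≤ u₁ → 0 ≤ u₂ →
      μ₁ * f₁ u₁ u₂ + μ₂ * f₂ u₁ u₂ ≥ ψ * (u₁ + u₂) ^ 2 - c * (u₁ + u₂) := by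
  intro u₁ u₂ hu₁ hu₂
  have diagonal := min_mul_sq_add_sq_le (μ₁ * b₁) (μ₂ * c₂) u₁ u₂
  have linear := mul_add_mul_le_max_mul_add hu₁ hu₂ (μ₁ * a₁) (μ₂ * a₂)
  have quadratic := sub_div_two_mul_add_sq_le (p := ψ₁) (q := ψ₂) (by linarith) u₁ u₂
  calc ψ * (u₁ + u₂) ^ 2 - c * (u₁ + u₂)
      ≤ ψ₁ * (u₁ ^ 2 + u₂ ^ 2) - 2 * ψ₂ * u₁ * u₂ - c * (u₁ + u₂) := by
        rw [hψ]; linarith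
    _ ≤ (μ₁ * b₁ * u₁ ^ 2 + μ₂ * c₂ * u₂ ^ 2) - 2 * ψ₂ * u₁ * u₂
          - (μ₁ * a₁ * u₁ + μ₂ * a₂ * u₂) := by
        rw [hψ₁, hc]; linarith
    _ = μ₁ * f₁ u₁ u₂ + μ₂ * f₂ u₁ u₂ := by
        rw [hf₁, hf₂, hψ₂]; ring

theorem stmt_1 (a₁ a₂ b₁ b₂ c₁ c₂ μ₁ μ₂ : ℝ)
    (ha₁ : 0 < a₁) (ha₂ : 0 < a₂) (hb₁ : 0 < b₁) (hb₂ : 0 < b₂)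
    (hc₁ : 0 < c₁) (hc₂ : 0 < c₂) (hμ₁ : 0 < μ₁) (hμ₂ : 0 < μ₂)
    (f₁ f₂ : ℝ → ℝ → ℝ)
    (hf₁ : ∀ u₁ u₂, f₁ u₁ u₂ = u₁ * (-a₁ + b₁ * u₁ - c₁ * u₂))
    (hf₂ : ∀ u₁ u₂, f₂ u₁ u₂ = u₂ * (-a₂ - b₂ * u₁ + c₂ * u₂))
    (ψ₁ ψ₂ c ψ : ℝ)
    (hψ₁ : ψ₁ = min (μ₁ * b₁) (μ₂ * c₂))
    (hψ₂ : ψ₂ = (μ₁ * c₁ + μ₂ * b₂) / 2)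
    (hc : c = max (μ₁ * a₁) (μ₂ * a₂))
    (hord : ψ₁ > ψ₂) (hpos : ψ₂ > 0)
    (hψ : ψ = (ψ₁ - ψ₂) / 2) :
    ∀ u₁ u₂ : ℝ, 0 ≤ u₁ → 0 ≤ u₂ →
      μ₁ * f₁ u₁ u₂ + μ₂ * f₂ u₁ u₂ ≥ ψ * (u₁ + u₂) ^ 2 - c * (u₁ + u₂) :=
  stmt_1_general a₁ a₂ b₁ b₂ c₁ c₂ μ₁ μ₂ f₁ f₂ hf₁ hf₂ ψ₁ ψ₂ c ψ hψ₁ hψ₂ hc hord hpos hψ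
end

section
/- Let τ̄ > 0, ψ̲ > 0, p̂₀ > τ̄/ψ̲, and let p̂ : [0,T] → ℝ be a differentiable function with p̂(0) = p̂₀ satisfying the differential inequality p̂'(t) + τ̄ p̂(t) ≥ ψ̲ p̂(t)² for all t in [0,T]. Then for all t in [0,T] with t < T₀ = (1/τ̄) ln(ψ̲ p̂₀/(ψ̲ p̂₀ - τ̄)), one has p̂(t) ≥ exp(-τ̄ t) / (1/p̂₀ - (ψ̲/τ̄)(1 - exp(-τ̄ t))). Consequently p̂ cannot be extended as a finite-valued solution of the inequality beyond time T₀. -/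
theorem stmt_8 (τ ψ p₀ T : ℝ) (hτ : 0 < τ) (hψ : 0 < ψ) (hp₀ : p₀ > τ / ψ)
    (hT : 0 < T)
    (T₀ : ℝ) (hT₀ : T₀ = (1 / τ) * Real.log (ψ * p₀ / (ψ * p₀ - τ)))
    (p : ℝ → ℝ) (hdiff : Differentiable ℝ p) (hp0 : p 0 = p₀)
    (hineq : ∀ t ∈ Set.Icc (0 : ℝ) T, deriv p t + τ * p t ≥ ψ * (p t) ^ 2) :
    (∀ t ∈ Set.Icc (0 : ℝ) T, t < T₀ →
      p t ≥ Real.exp (-τ * t) / (1 / p₀ - (ψ / τ) * (1 - Real.exp (-τ * t)))) ∧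
    T < T₀ := by
  have hp₀pos : 0 < p₀ := lt_trans (div_pos hτ hψ) hp₀
  have hψp₀ : τ < ψ * p₀ := by
    rw [gt_iff_lt, div_lt_iff₀ hψ] at hp₀; linarith
  -- the comparison function D (the reciprocal bound, times exp(τt))
  set D : ℝ → ℝ := fun t => Real.exp (τ * t) / p₀ - ψ / τ * (Real.exp (τ * t) - 1) with hDdef
  have hDD : ∀ t, HasDerivAt D ((τ / p₀ - ψ) * Real.exp (τ * t)) t := by
    intro t
    have h1 : HasDerivAt (fun t : ℝ => Real.exp (τ * t)) (τ * Real.exp (τ * t)) t := by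
      have := ((hasDerivAt_id t).const_mul τ).exp
      simpa [mul_comm] using this
    have := ((h1.div_const p₀).sub (((h1.sub_const 1)).const_mul (ψ / τ)))
    refine this.congr_deriv ?_
    field_simp
  have hDanti : StrictAnti D := by
    apply strictAnti_of_deriv_neg
    intro t
    rw [(hDD t).deriv]
    apply mul_neg_of_neg_of_pos _ (Real.exp_pos _)
    rw [sub_neg, div_lt_iff₀ hp₀pos]
    linarith
  have hDcont : Continuous D := by
    fun_prop
  -- T₀ positive and D T₀ = 0
  have hexpT₀ : Real.exp (τ * T₀) = ψ * p₀ / (ψ * p₀ - τ) := by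
    rw [hT₀]
    rw [show τ * (1 / τ * Real.log (ψ * p₀ / (ψ * p₀ - τ))) = Real.log (ψ * p₀ / (ψ * p₀ - τ)) by
      field_simp]
    rw [Real.exp_log]
    exact div_pos (by positivity) (by linarith)
  have hT₀pos : 0 < T₀ := by
    rw [hT₀]
    apply mul_pos (by positivity)
    apply Real.log_pos
    rw [lt_div_iff₀ (by linarith)]
    linarith
  have hDT₀ : D T₀ = 0 := by
    have h1 : ψ * p₀ - τ ≠ 0 := by linarith
    simp only [hDdef, hexpT₀]
    field_simp
    ring
  have hDpos : ∀ t, t < T₀ → 0 < D t := fun t ht => hDT₀ ▸ hDanti ht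
  have hDnonneg : ∀ t, t ≤ T₀ → 0 ≤ D t := by
    intro t ht
    rcases eq_or_lt_of_le ht with h | h
    · simp [h, hDT₀]
    · exact (hDpos t h).le
  -- antiderivative of ψ p
  set A : ℝ → ℝ := fun t => ψ * ∫ s in (0:ℝ)..t, p s with hAdef
  have hAA : ∀ t, HasDerivAt A (ψ * p t) t := by
    intro t
    exact ((hdiff.continuous.integral_hasStrictDerivAt 0 t).hasDerivAt).const_mul ψ
  set G : ℝ → ℝ := fun t => p t * D t - 1 with hGdef
  set H : ℝ → ℝ := fun t => G t * Real.exp (-A t) with hHdef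
  have hGD : ∀ t, HasDerivAt G (deriv p t * D t + p t * ((τ / p₀ - ψ) * Real.exp (τ * t))) t :=
    fun t => (((hdiff t).hasDerivAt.mul (hDD t)).sub_const 1)
  have hHD : ∀ t, HasDerivAt H
      ((deriv p t * D t + p t * ((τ / p₀ - ψ) * Real.exp (τ * t)) - ψ * p t * G t)
        * Real.exp (-A t)) t := by
    intro t
    have := (hGD t).mul (((hAA t).neg).exp)
    refine this.congr_deriv ?_
    simp only [Pi.neg_apply]
    ring
  -- key positivity of deriv H on [0, min T T₀]
  set T' : ℝ := min T T₀ with hT'def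
  have hmono : MonotoneOn H (Set.Icc 0 T') := by
    apply monotoneOn_of_deriv_nonneg (convex_Icc _ _)
    · exact (Continuous.continuousOn (by
        exact ((hdiff.continuous.mul hDcont).sub continuous_const).mul
          (Real.continuous_exp.comp (Continuous.neg (by exact continuous_iff_continuousAt.2 fun t => (hAA t).continuousAt)))))
    · intro x _
      exact (hHD x).differentiableAt.differentiableWithinAt
    · intro x hx
      rw [interior_Icc] at hx
      rw [(hHD x).deriv]
      apply mul_nonneg _ (Real.exp_pos _).le
      have hxIcc : x ∈ Set.Icc (0:ℝ) T := ⟨hx.1.le, hx.2.le.trans (min_le_left _ _)⟩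
      have h1 : ψ * (p x) ^ 2 ≤ deriv p x + τ * p x := hineq x hxIcc
      have h2 : 0 ≤ D x := hDnonneg x (hx.2.le.trans (min_le_right _ _))
      have hDderiv : (τ / p₀ - ψ) * Real.exp (τ * x) = τ * D x - ψ := by
        simp only [hDdef]
        field_simp
        ring
      rw [hDderiv]
      have : deriv p x * D x + p x * (τ * D x - ψ) - ψ * p x * G x
          = (deriv p x + τ * p x - ψ * (p x) ^ 2) * D x := by
        simp only [hGdef]; ring
      rw [this]
      exact mul_nonneg (by linarith) h2
  have hH0 : H 0 = 0 := by
    simp [hHdef, hGdef, hAdef, hDdef, hp0]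
    field_simp
    norm_num
  have hkey : ∀ t ∈ Set.Icc (0:ℝ) T', 1 ≤ p t * D t := by
    intro t ht
    have := hmono (Set.left_mem_Icc.mpr (le_min hT.le hT₀pos.le)) ht ht.1
    rw [hH0] at this
    have hG : 0 ≤ G t :=
      (mul_nonneg_iff_of_pos_right (Real.exp_pos (-A t))).mp this
    simpa [hGdef, sub_nonneg] using hG
  -- T < T₀
  have hTT₀ : T < T₀ := by
    by_contra h
    push_neg at h  -- T₀ ≤ T
    have hcont : ContinuousAt (fun t => p t * D t) T₀ :=
      (hdiff.continuous.mul hDcont).continuousAt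
    have hlim : Filter.Tendsto (fun t => p t * D t) (nhdsWithin T₀ (Set.Iio T₀))
        (nhds (p T₀ * D T₀)) := hcont.continuousWithinAt.tendsto
    have hineq' : ∀ᶠ t in nhdsWithin T₀ (Set.Iio T₀), 1 ≤ p t * D t := by
      have hmem : Set.Ioo 0 T₀ ∈ nhdsWithin T₀ (Set.Iio T₀) := by
        rw [mem_nhdsWithin]
        exact ⟨Set.Ioi 0, isOpen_Ioi, hT₀pos, fun x hx => ⟨hx.1, hx.2⟩⟩
      filter_upwards [hmem] with t ht
      exact hkey t ⟨ht.1.le, le_min (ht.2.le.trans h) ht.2.le⟩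
    have := ge_of_tendsto hlim hineq'
    rw [hDT₀, mul_zero] at this
    linarith
  refine ⟨?_, hTT₀⟩
  intro t ht htT₀
  have hDt : 0 < D t := hDpos t htT₀
  have h1 : 1 ≤ p t * D t := hkey t ⟨ht.1, le_min ht.2 htT₀.le⟩
  have hpt : (D t)⁻¹ ≤ p t := by
    rw [inv_le_iff_one_le_mul₀ hDt] -- maybe wrong name
    exact h1
  have hexpne : Real.exp (-τ * t) ≠ 0 := (Real.exp_pos _).ne'
  have hexpmul : Real.exp (-τ * t) * Real.exp (τ * t) = 1 := by
    rw [← Real.exp_add]; ring_nf; exact Real.exp_zero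
  have hden : 1 / p₀ - ψ / τ * (1 - Real.exp (-τ * t)) = Real.exp (-τ * t) * D t := by
    simp only [hDdef]
    have hm : Real.exp (-(τ * t)) * Real.exp (τ * t) = 1 := by
      rw [← Real.exp_add]; ring_nf; exact Real.exp_zero
    field_simp
    linear_combination (p₀ * ψ - τ) * hm
  have hrw : Real.exp (-τ * t) / (1 / p₀ - ψ / τ * (1 - Real.exp (-τ * t))) = (D t)⁻¹ := by
    rw [hden, div_mul_cancel_left₀ hexpne]
  rw [ge_iff_le, hrw]
  exact hpt
end
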